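/- Johnson-type bound for constant-composition codes: A_q(n,d,[w_1,...,w_{q-1}]) ≤ ⌊(n/w_1) · A_q(n-1,d,[w_1-1,w_2,...,w_{q-1}])⌋, where w_1 ≥ w_2 ≥ ... ≥ w_{q-1} > 0 and w_1 ≥ 1. -/

import Mathlib

open Finset

/-- Hamming distance between two words. -/
def hdist {n q : ℕ} (u v : Fin n → ZMod q) : ℕ :=
  (univ.filter (fun x => u x ≠ v x)).card

/-- Maximum size of a `q`-ary code of length `n`, minimum distance `d` and
constant composition `wb` (for nonzero symbols `1, …, q-1`). -/
noncomputable def ACC (q n d : ℕ) (wb : ℕ → ℕ) : ℕ :=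
  sSup {k : ℕ | ∃ C : Finset (Fin n → ZMod q),
    (∀ u ∈ C, ∀ i, 1 ≤ i → i ≤ q - 1 →
      (univ.filter (fun x => u x = (i : ZMod q))).card = wb i) ∧
    (∀ u ∈ C, ∀ v ∈ C, u ≠ v → d ≤ hdist u v) ∧
    C.card = k}

lemma card_filter_succAbove {m : ℕ} (x : Fin (m+1)) (p : Fin (m+1) → Prop) [DecidablePred p] :
    (univ.filter (fun j => p (x.succAbove j))).card
      = (univ.filter (fun y => y ≠ x ∧ p y)).card := by
  apply Finset.card_nbij (i := fun j => x.succAbove j)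
  · intro j hj
    simp only [coe_filter, Set.mem_setOf_eq, mem_filter, mem_univ, true_and] at *
    exact ⟨Fin.succAbove_ne x j, hj⟩
  · intro a _ b _ h
    exact x.succAbove_right_injective h
  · intro y hy
    simp only [coe_filter, Set.mem_setOf_eq, mem_univ, true_and] at hy
    obtain ⟨j, rfl⟩ := Fin.exists_succAbove_eq hy.1
    exact ⟨j, by simp [hy.2], rfl⟩

theorem stmt6 (q n d : ℕ) (hq : 2 ≤ q) (wb : ℕ → ℕ)
    (hmono : ∀ i j, 1 ≤ i → i ≤ j → j ≤ q - 1 → wb j ≤ wb i)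
    (hpos : ∀ i, 1 ≤ i → i ≤ q - 1 → 1 ≤ wb i) :
    ACC q n d wb ≤ n * ACC q (n - 1) d (Function.update wb 1 (wb 1 - 1)) / wb 1 := by
  haveI : NeZero q := ⟨by omega⟩
  have hq1 : 1 ≤ q - 1 := by omega
  have hw1 : 1 ≤ wb 1 := hpos 1 le_rfl hq1
  rw [ACC]
  refine csSup_le ?_ ?_
  · exact ⟨0, ∅, by simp, by simp, by simp⟩
  rintro k ⟨C, h1, h2, rfl⟩
  obtain _ | m := n
  · -- n = 0 : C must be empty
    have hC : C.card = 0 := by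
      rcases C.eq_empty_or_nonempty with rfl | ⟨u, hu⟩
      · simp
      · have h := h1 u hu 1 le_rfl hq1
        have h0 : (univ.filter fun x => u x = ((1:ℕ) : ZMod q)).card = 0 := by
          simp [Finset.filter_true_of_mem, Finset.eq_empty_of_isEmpty]
        omega
    simp [hC]
  · -- n = m + 1
    set wb' : ℕ → ℕ := Function.update wb 1 (wb 1 - 1) with hwb'
    set A := ACC q m d wb' with hA
    have hbdd : BddAbove {k : ℕ | ∃ C : Finset (Fin m → ZMod q),
        (∀ u ∈ C, ∀ i, 1 ≤ i → i ≤ q - 1 →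
          (univ.filter (fun x => u x = (i : ZMod q))).card = wb' i) ∧
        (∀ u ∈ C, ∀ v ∈ C, u ≠ v → d ≤ hdist u v) ∧
        C.card = k} := by
      refine ⟨Fintype.card (Fin m → ZMod q), ?_⟩
      rintro k ⟨D, -, -, rfl⟩
      exact (Finset.card_le_univ D).trans (le_of_eq Finset.card_univ)
    -- key: for each coordinate x, the number of codewords with symbol 1 at x is ≤ A
    have key : ∀ x : Fin (m+1),
        (C.filter (fun u => u x = ((1:ℕ) : ZMod q))).card ≤ A := by
      intro x
      set Cx := C.filter (fun u => u x = ((1:ℕ) : ZMod q)) with hCx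
      set π : (Fin (m+1) → ZMod q) → (Fin m → ZMod q) :=
        fun u j => u (x.succAbove j) with hπ
      have hmemx : ∀ u ∈ Cx, u x = ((1:ℕ) : ZMod q) := by
        intro u hu; exact (Finset.mem_filter.mp hu).2
      have hmemC : ∀ u ∈ Cx, u ∈ C := fun u hu => (Finset.mem_filter.mp hu).1
      have hπinj : Set.InjOn π Cx := by
        intro u hu v hv h
        funext y
        rcases eq_or_ne y x with rfl | hy
        · rw [hmemx u hu, hmemx v hv]
        · obtain ⟨j, rfl⟩ := Fin.exists_succAbove_eq hy
          exact congrFun h j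
      have hcard : (Cx.image π).card = Cx.card := Finset.card_image_of_injOn hπinj
      have hmem : (Cx.image π).card ∈ {k : ℕ | ∃ C : Finset (Fin m → ZMod q),
          (∀ u ∈ C, ∀ i, 1 ≤ i → i ≤ q - 1 →
            (univ.filter (fun x => u x = (i : ZMod q))).card = wb' i) ∧
          (∀ u ∈ C, ∀ v ∈ C, u ≠ v → d ≤ hdist u v) ∧
          C.card = k} := by
        refine ⟨Cx.image π, ?_, ?_, rfl⟩
        · rintro u' hu' i hi1 hi2
          obtain ⟨u, hu, rfl⟩ := Finset.mem_image.mp hu'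
          show (univ.filter (fun j => u (x.succAbove j) = (i : ZMod q))).card = wb' i
          rw [card_filter_succAbove x (fun y => u y = (i : ZMod q))]
          rcases eq_or_ne i 1 with rfl | hi
          · have hset : (univ.filter (fun y => y ≠ x ∧ u y = ((1:ℕ) : ZMod q)))
                = (univ.filter (fun y => u y = ((1:ℕ) : ZMod q))).erase x := by
              ext y
              simp [Finset.mem_erase, and_comm]
            rw [hset, Finset.card_erase_of_mem
                (by simp [hmemx u hu]), h1 u (hmemC u hu) 1 le_rfl hq1]
            simp [hwb']
          · have hne1 : ((i:ℕ) : ZMod q) ≠ ((1:ℕ) : ZMod q) := by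
              intro h
              have h1v := ZMod.val_cast_of_lt (show i < q by omega)
              have h2v := ZMod.val_cast_of_lt (show 1 < q by omega)
              rw [h] at h1v
              omega
            have hset : (univ.filter (fun y => y ≠ x ∧ u y = (i : ZMod q)))
                = (univ.filter (fun y => u y = (i : ZMod q))) := by
              ext y
              simp only [Finset.mem_filter, mem_univ, true_and, and_iff_right_iff_imp]
              intro hy hyx
              rw [hyx, hmemx u hu] at hy
              exact hne1 hy.symm
            rw [hset, h1 u (hmemC u hu) i hi1 hi2, hwb', Function.update_of_ne hi]
        · rintro u' hu' v' hv' hne'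
          obtain ⟨u, hu, rfl⟩ := Finset.mem_image.mp hu'
          obtain ⟨v, hv, rfl⟩ := Finset.mem_image.mp hv'
          have huv : u ≠ v := fun h => hne' (by rw [h])
          have hd := h2 u (hmemC u hu) v (hmemC v hv) huv
          have : hdist (π u) (π v) = hdist u v := by
            show (univ.filter (fun j => u (x.succAbove j) ≠ v (x.succAbove j))).card = _
            rw [card_filter_succAbove x (fun y => u y ≠ v y)]
            congr 1
            ext y
            simp only [Finset.mem_filter, mem_univ, true_and, and_iff_right_iff_imp]
            intro hy hyx
            rw [hyx, hmemx u hu, hmemx v hv] at hy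
            exact hy rfl
          omega
      have := le_csSup hbdd hmem
      rw [hcard] at this
      exact this.trans_eq rfl
    -- counting argument
    have hcount : C.card * wb 1 ≤ (m + 1) * A := by
      have e1 : C.card * wb 1 = ∑ u ∈ C, (univ.filter (fun x => u x = ((1:ℕ) : ZMod q))).card := by
        rw [Finset.sum_congr rfl (fun u hu => h1 u hu 1 le_rfl hq1)]
        simp [mul_comm]
      have e2 : ∑ u ∈ C, (univ.filter (fun x => u x = ((1:ℕ) : ZMod q))).card
          = ∑ x : Fin (m+1), (C.filter (fun u => u x = ((1:ℕ) : ZMod q))).card := by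
        simp only [Finset.card_filter]
        exact Finset.sum_comm
      rw [e1, e2]
      calc ∑ x : Fin (m+1), (C.filter (fun u => u x = ((1:ℕ) : ZMod q))).card
          ≤ ∑ _x : Fin (m+1), A := Finset.sum_le_sum (fun x _ => key x)
        _ = (m + 1) * A := by simp [mul_comm]
    rw [Nat.le_div_iff_mul_le (by omega : 0 < wb 1)]
    simpa using hcount
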